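/- The function h_t(v) = C (n(v)+1)^{-1/4} (2t)^{(n(v)+x(v))/2} / √((n(v)+x(v)-1)!) on words over the alphabet {1,...,d} (with letter 1 distinguished, n(v) the word length, x(v) the number of 1s, C ≥ 2 a constant, t > 0) satisfies h_t(uv) ≤ h_t(u)·h_t(v) for all words u, v, where uv denotes concatenation. -/

import Mathlib

open scoped BigOperators

/-- Words over the alphabet `Fin d`. -/
abbrev Word (d : ℕ) := List (Fin d)

/-- The extended tensor algebra over `ℝ^d`, viewed as coefficient functions on words. -/
abbrev ETA (d : ℕ) := Word d → ℝ

namespace ETA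

variable {d : ℕ}

/-- The unit (empty word) element `∅`. -/
noncomputable def unit (d : ℕ) : ETA d := fun v => if v = [] then 1 else 0

/-- Concatenation (tensor) product. -/
noncomputable def concat (p q : ETA d) : ETA d :=
  fun v => ∑ k ∈ Finset.range (v.length + 1), p (v.take k) * q (v.drop k)

/-- Concatenation powers. -/
noncomputable def cpow (p : ETA d) : ℕ → ETA d
  | 0 => unit d
  | n + 1 => concat (cpow p n) p

/-- Shuffle product of two words as a multiset of words. -/
def shuffleW {A : Type*} : List A → List A → Multiset (List A)
  | [], w => {w}
  | u, [] => {u}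
  | a :: u, b :: w =>
      (shuffleW u (b :: w)).map (a :: ·) + (shuffleW (a :: u) w).map (b :: ·)
  termination_by u w => u.length + w.length
  decreasing_by all_goals (simp only [List.length_cons]; omega)

/-- The finset of all words of length `n` over `Fin d`. -/
noncomputable def wordsLen (d n : ℕ) : Finset (Word d) :=
  Finset.image (fun f : Fin n → Fin d => List.ofFn f) Finset.univ

/-- Shuffle product on the extended tensor algebra (coefficient-wise finite sums). -/
noncomputable def shuffle (p q : ETA d) : ETA d :=
  fun v => ∑ k ∈ Finset.range (v.length + 1),
    ∑ u ∈ wordsLen d k, ∑ w ∈ wordsLen d (v.length - k),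
      p u * q w * ((shuffleW u w).count v : ℝ)

/-- Shuffle powers. -/
noncomputable def spow (p : ETA d) : ℕ → ETA d
  | 0 => unit d
  | n + 1 => shuffle (spow p n) p

/-- A linear combination of single letters `Σ_i c i • e_i`. -/
def letters (c : Fin d → ℝ) : ETA d := fun v =>
  match v with
  | [i] => c i
  | _ => 0

/-- A single letter `e_i`. -/
noncomputable def letter (i : Fin d) : ETA d := fun v => if v = [i] then 1 else 0

/-- The resolvent `(∅ - q)⁻¹ = Σ_n q^{⊗n}`, defined coefficient-wise. -/
noncomputable def res (q : ETA d) : ETA d := fun v => ∑' n, cpow q n v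

/-- The shuffle exponential `exp^⧢(b) = Σ_n b^{⧢n}/n!`, defined coefficient-wise. -/
noncomputable def shuexp (b : ETA d) : ETA d := fun v => ∑' n, spow b n v / (Nat.factorial n : ℝ)

/-- Right projection `ℓ|_i`, removing a terminal letter `i`. -/
def proj (p : ETA d) (i : Fin d) : ETA d := fun v => p (v ++ [i])

end ETA

/-- The dominating function `h_t(v) = C (n+1)^{-1/4} (2t)^{(n+x)/2} / √((n+x-1)!)`,
where `n` is the length of `v` and `x` the number of occurrences of the distinguished
letter `0` (the time letter), with the convention `m! = 1` for `m ≤ 0`. -/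
noncomputable def hfun {d : ℕ} [NeZero d] (C t : ℝ) (v : Word d) : ℝ :=
  C * ((v.length : ℝ) + 1) ^ (-(1/4 : ℝ)) *
    (2 * t) ^ (((v.length + v.count 0 : ℕ) : ℝ) / 2) /
      Real.sqrt (Nat.factorial (v.length + v.count 0 - 1))

private lemma nat_fact_key (n1 n2 : ℕ) (h1 : 1 ≤ n1) (h2 : 1 ≤ n2) :
    n1 * ((n1-1).factorial * (n2-1).factorial) ≤ (n1+n2-1).factorial := by
  have hd := Nat.factorial_mul_factorial_dvd_factorial_add n1 (n2-1)
  have hle := Nat.le_of_dvd (Nat.factorial_pos _) hd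
  rw [show n1 + (n2-1) = n1+n2-1 by omega] at hle
  calc n1 * ((n1-1).factorial * (n2-1).factorial)
      = (n1 * (n1-1).factorial) * (n2-1).factorial := by ring
    _ = n1.factorial * (n2-1).factorial := by rw [Nat.mul_factorial_pred (by omega)]
    _ ≤ _ := hle

private lemma nat_key2 (a b n1 n2 : ℕ) (h1 : 1 ≤ n1) (h2 : 1 ≤ n2)
    (ha : a + 1 ≤ 2*n1) (hb : b + 1 ≤ 2*n2) :
    ((n1-1).factorial * (n2-1).factorial)^2 * ((a+1)*(b+1))
      ≤ 16 * ((n1+n2-1).factorial)^2 := by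
  have k1 := nat_fact_key n1 n2 h1 h2
  have k2 := nat_fact_key n2 n1 h2 h1
  rw [show n2+n1-1 = n1+n2-1 by omega] at k2
  set F := (n1-1).factorial * (n2-1).factorial with hF
  rw [show (n2-1).factorial * (n1-1).factorial = F by rw [hF]; ring] at k2
  calc F^2 * ((a+1)*(b+1)) ≤ F^2 * ((2*n1)*(2*n2)) := by
        exact Nat.mul_le_mul_left _ (Nat.mul_le_mul ha hb)
    _ = 4 * ((n1 * F) * (n2 * F)) := by ring
    _ ≤ 4 * ((n1+n2-1).factorial * (n1+n2-1).factorial) :=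
        Nat.mul_le_mul_left _ (Nat.mul_le_mul k1 k2)
    _ ≤ 16 * ((n1+n2-1).factorial)^2 := by nlinarith

private lemma real_key (a b n1 n2 : ℕ) (h1 : 1 ≤ n1) (h2 : 1 ≤ n2)
    (ha : a + 1 ≤ 2*n1) (hb : b + 1 ≤ 2*n2) :
    Real.sqrt ((n1-1).factorial) * Real.sqrt ((n2-1).factorial) *
      (((a:ℝ)+1)*((b:ℝ)+1)) ^ ((1/4:ℝ))
    ≤ 2 * Real.sqrt ((n1+n2-1).factorial) := by
  have hw : (0:ℝ) ≤ ((a:ℝ)+1)*((b:ℝ)+1) := by positivity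
  apply le_of_pow_le_pow_left₀ (n := 4) (by norm_num) (by positivity)
  have e1 : Real.sqrt ((n1-1).factorial) ^ 4 = (((n1-1).factorial : ℝ))^2 := by
    rw [show (4:ℕ) = 2*2 from rfl, pow_mul, Real.sq_sqrt (by positivity)]
  have e2 : Real.sqrt ((n2-1).factorial) ^ 4 = (((n2-1).factorial : ℝ))^2 := by
    rw [show (4:ℕ) = 2*2 from rfl, pow_mul, Real.sq_sqrt (by positivity)]
  have e3 : Real.sqrt ((n1+n2-1).factorial) ^ 4 = (((n1+n2-1).factorial : ℝ))^2 := by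
    rw [show (4:ℕ) = 2*2 from rfl, pow_mul, Real.sq_sqrt (by positivity)]
  have eZ : ((((a:ℝ)+1)*((b:ℝ)+1)) ^ ((1/4:ℝ))) ^ (4:ℕ)
      = ((a:ℝ)+1)*((b:ℝ)+1) := by
    rw [← Real.rpow_natCast ((((a:ℝ)+1)*((b:ℝ)+1)) ^ ((1/4:ℝ))) 4,
      ← Real.rpow_mul hw]
    norm_num
  rw [mul_pow, mul_pow, mul_pow, e1, e2, e3, eZ]
  have hcast : ((((n1-1).factorial : ℝ)) * (((n2-1).factorial : ℝ)))^2 *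
      (((a:ℝ)+1)*((b:ℝ)+1)) ≤ 16 * (((n1+n2-1).factorial : ℝ))^2 := by
    have := nat_key2 a b n1 n2 h1 h2 ha hb
    exact_mod_cast this
  nlinarith [hcast]

private lemma key_ineq (C t : ℝ) (hC : 2 ≤ C) (ht : 0 < t) (a b n1 n2 : ℕ)
    (h1 : 1 ≤ n1) (h2 : 1 ≤ n2) (ha : a + 1 ≤ 2*n1) (hb : b + 1 ≤ 2*n2) :
    C * (((a+b:ℕ):ℝ)+1) ^ (-(1/4:ℝ)) * (2*t) ^ (((n1+n2:ℕ):ℝ)/2) /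
        Real.sqrt (Nat.factorial (n1+n2-1))
    ≤ (C * ((a:ℝ)+1) ^ (-(1/4:ℝ)) * (2*t) ^ (((n1:ℕ):ℝ)/2) /
        Real.sqrt (Nat.factorial (n1-1))) *
      (C * ((b:ℝ)+1) ^ (-(1/4:ℝ)) * (2*t) ^ (((n2:ℕ):ℝ)/2) /
        Real.sqrt (Nat.factorial (n2-1))) := by
  have hT : (0:ℝ) < 2*t := by linarith
  have hC0 : (0:ℝ) < C := by linarith
  have hexp : ((n1+n2:ℕ):ℝ)/2 = (n1:ℝ)/2 + (n2:ℝ)/2 := by push_cast; ring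
  rw [hexp, Real.rpow_add hT]
  set T1 := (2*t) ^ ((n1:ℝ)/2) with hT1def
  set T2 := (2*t) ^ ((n2:ℝ)/2) with hT2def
  have hT1 : 0 < T1 := Real.rpow_pos_of_pos hT _
  have hT2 : 0 < T2 := Real.rpow_pos_of_pos hT _
  set F1 := Real.sqrt ((n1-1).factorial) with hF1def
  set F2 := Real.sqrt ((n2-1).factorial) with hF2def
  set Q := Real.sqrt ((n1+n2-1).factorial) with hQdef
  have hF1 : 0 < F1 := Real.sqrt_pos.mpr (by positivity)
  have hF2 : 0 < F2 := Real.sqrt_pos.mpr (by positivity)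
  have hQ : 0 < Q := Real.sqrt_pos.mpr (by positivity)
  set P0 := (((a+b:ℕ):ℝ)+1) ^ (-(1/4:ℝ)) with hP0def
  set P1 := ((a:ℝ)+1) ^ (-(1/4:ℝ)) with hP1def
  set P2 := ((b:ℝ)+1) ^ (-(1/4:ℝ)) with hP2def
  have hP0 : 0 < P0 := Real.rpow_pos_of_pos (by positivity) _
  have hP1 : 0 < P1 := Real.rpow_pos_of_pos (by positivity) _
  have hP2 : 0 < P2 := Real.rpow_pos_of_pos (by positivity) _
  set Z := (((a:ℝ)+1)*((b:ℝ)+1)) ^ ((1/4:ℝ)) with hZdef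
  have hZ : 0 < Z := Real.rpow_pos_of_pos (by positivity) _
  have hP0le : P0 ≤ 1 := by
    apply Real.rpow_le_one_of_one_le_of_nonpos
    · have : (0:ℝ) ≤ ((a+b:ℕ):ℝ) := Nat.cast_nonneg _
      linarith
    · norm_num
  have hmul : P1 * P2 = Z⁻¹ := by
    rw [hP1def, hP2def, hZdef, ← Real.mul_rpow (by positivity) (by positivity),
      ← Real.rpow_neg (by positivity)]
  have h5 : F1 * F2 * Z ≤ C * Q := by
    calc F1 * F2 * Z ≤ 2 * Q := real_key a b n1 n2 h1 h2 ha hb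
      _ ≤ C * Q := by nlinarith
  have hfz : F1 * F2 ≤ C * Q * (P1 * P2) := by
    rw [hmul]
    calc F1 * F2 = (F1 * F2 * Z) * Z⁻¹ := by field_simp
      _ ≤ (C * Q) * Z⁻¹ := by
          apply mul_le_mul_of_nonneg_right h5 (by positivity)
  rw [div_mul_div_comm, div_le_div_iff₀ (by positivity) (by positivity)]
  have hA : C * P0 ≤ C := by nlinarith
  calc C * P0 * (T1 * T2) * (F1 * F2)
      ≤ C * (T1 * T2) * (C * Q * (P1 * P2)) := by
        have hstep := mul_le_mul
          (mul_le_mul_of_nonneg_right hA (by positivity : (0:ℝ) ≤ T1 * T2)) hfz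
          (by positivity) (by positivity)
        linarith [hstep]
    _ = C * P1 * T1 * (C * P2 * T2) * Q := by ring

/-- Sub-multiplicativity of `h` under concatenation of words. -/
theorem hfun_submultiplicative (d : ℕ) [NeZero d] (C t : ℝ) (hC : 2 ≤ C) (ht : 0 < t)
    (u v : Word d) :
    hfun C t (u ++ v) ≤ hfun C t u * hfun C t v := by
  have hC0 : (0:ℝ) < C := by linarith
  have hT : (0:ℝ) < 2*t := by linarith
  have hempty : hfun C t ([] : Word d) = C := by
    simp [hfun, Real.sqrt_one, Real.one_rpow, Real.rpow_zero]
  rcases eq_or_ne u [] with rfl | hu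
  · rw [List.nil_append, hempty]
    have h0 : 0 ≤ hfun C t v := by unfold hfun; positivity
    nlinarith
  rcases eq_or_ne v [] with rfl | hv
  · rw [List.append_nil, hempty]
    have h0 : 0 ≤ hfun C t u := by unfold hfun; positivity
    nlinarith
  · have hul : 1 ≤ u.length := List.length_pos_iff.mpr hu
    have hvl : 1 ≤ v.length := List.length_pos_iff.mpr hv
    simp only [hfun, List.length_append, List.count_append]
    rw [show u.length + v.length + (u.count 0 + v.count 0)
        = (u.length + u.count 0) + (v.length + v.count 0) from by omega]
    exact key_ineq C t hC ht u.length v.length (u.length + u.count 0)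
      (v.length + v.count 0) (by omega) (by omega) (by omega) (by omega)
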